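/- Let n ≥ 1 and let f ∈ ℂ[x_1,…,x_n] be an irreducible polynomial with f(0) ≠ 0 such that ∇f(x) ≠ 0 for every x ∈ ℂ^n with f(x) = 0. Then there exists a nonzero polynomial g ∈ ℂ[u_1,…,u_n] such that for every u ∈ ℂ^n with g(u) ≠ 0, every solution (λ, x) ∈ ℂ^{n+1} of the Lagrange multiplier system ℒ_{f,u} = 0 satisfies λ ≠ 0 and x_i ≠ 0 for all 1 ≤ i ≤ n. -/

import Mathlib

open MvPolynomial

noncomputable section

namespace AuxStmt7

open Module

def B (n m : ℕ) : ℕ := Nat.card {α : Fin n →₀ ℕ // (α.sum fun _ e => e) ≤ m}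

lemma sum_eq {n : ℕ} (α : Fin n →₀ ℕ) : (α.sum fun _ e => e) = ∑ j, α j :=
  Finsupp.sum_fintype _ _ (fun _ => rfl)

lemma coord_le_sum {n : ℕ} (α : Fin n →₀ ℕ) (j : Fin n) : α j ≤ (α.sum fun _ e => e) := by
  rw [sum_eq]; exact Finset.single_le_sum (fun _ _ => Nat.zero_le _) (Finset.mem_univ j)

instance finB (n m : ℕ) : Finite {α : Fin n →₀ ℕ // (α.sum fun _ e => e) ≤ m} := by
  apply Finite.of_injective
    (fun (α : {α : Fin n →₀ ℕ // (α.sum fun _ e => e) ≤ m}) =>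
      (fun j => (⟨(α : Fin n →₀ ℕ) j,
      Nat.lt_succ_of_le ((coord_le_sum α.1 j).trans α.2)⟩ : Fin (m+1)) : Fin n → Fin (m+1)))
  intro a b hab
  ext j
  exact congrArg Fin.val (congrFun hab j)

lemma card_le1 (n t : ℕ) : (t + 1) ^ n ≤ B n (n * t) := by
  have : Nat.card (Fin n → Fin (t+1)) ≤ B n (n * t) := by
    apply Nat.card_le_card_of_injective
      (f := fun v => (⟨Finsupp.equivFunOnFinite.symm (fun j => (v j : ℕ)), by
        rw [sum_eq]
        calc ∑ j, (Finsupp.equivFunOnFinite.symm (fun j => ((v j : ℕ))) : Fin n →₀ ℕ) j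
            = ∑ j : Fin n, (v j : ℕ) := by rfl
          _ ≤ ∑ _j : Fin n, t := Finset.sum_le_sum (fun j _ => Nat.lt_succ_iff.mp (v j).2)
          _ = n * t := by simp [Finset.sum_const, Finset.card_univ]⟩ :
        {α : Fin n →₀ ℕ // (α.sum fun _ e => e) ≤ n * t}))
    intro a b hab
    funext j
    have := congrArg (fun (z : {α : Fin n →₀ ℕ // (α.sum fun _ e => e) ≤ n * t}) => (z : Fin n →₀ ℕ) j) hab
    simpa using Fin.ext this
  calc (t+1)^n = Nat.card (Fin n → Fin (t+1)) := by simp [Nat.card_fun]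
    _ ≤ _ := this

lemma card_le2 (m e' D : ℕ) : B (m+1) (e'+D) ≤ B (m+1) e' + D * (e'+D+1)^m := by
  classical
  have key : B (m+1) (e'+D)
      ≤ Nat.card ({α : Fin (m+1) →₀ ℕ // (α.sum fun _ e => e) ≤ e'}
          ⊕ (Fin D × (Fin m → Fin (e'+D+1)))) := by
    apply Nat.card_le_card_of_injective (f := fun (α : {α : Fin (m+1) →₀ ℕ // (α.sum fun _ e => e) ≤ e'+D}) =>
      if h : (α.1.sum fun _ e => e) ≤ e' then Sum.inl ⟨α.1, h⟩
      else Sum.inr (⟨(α.1.sum fun _ e => e) - e' - 1, by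
          have h2 := α.2; omega⟩,
        fun j => ⟨α.1 j.succ, Nat.lt_succ_of_le ((coord_le_sum α.1 j.succ).trans α.2)⟩))
    have main : ∀ (x y : Fin (m+1) →₀ ℕ), (x.sum fun _ e => e) = (y.sum fun _ e => e) →
        (∀ j : Fin m, x j.succ = y j.succ) → x = y := by
      intro x y hs ht
      have hx := sum_eq x
      have hy := sum_eq y
      rw [Fin.sum_univ_succ] at hx hy
      have hsum2 : ∑ j : Fin m, x j.succ = ∑ j : Fin m, y j.succ :=
        Finset.sum_congr rfl (fun j _ => ht j)
      have h0 : x 0 = y 0 := by omega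
      ext j
      exact Fin.cases h0 (fun j => ht j) j
    intro a b hab
    apply Subtype.ext
    by_cases h1 : (a.1.sum fun _ e => e) ≤ e' <;> by_cases h2 : (b.1.sum fun _ e => e) ≤ e' <;>
      simp only [h1, h2, dif_pos, dif_neg, not_false_iff, dite_true, dite_false] at hab
    · injection hab with h
      exact congrArg (fun z : {α : Fin (m+1) →₀ ℕ // (α.sum fun _ e => e) ≤ e'} => z.1) h
    · exact absurd hab (by simp)
    · exact absurd hab (by simp)
    · injection hab with hp
      have hfst : ((a.1.sum fun _ e => e) - e' - 1) = ((b.1.sum fun _ e => e) - e' - 1) :=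
        congrArg Fin.val (congrArg Prod.fst hp)
      have hsnd := congrArg Prod.snd hp
      refine main _ _ (by omega) (fun j => ?_)
      exact congrArg Fin.val (congrFun hsnd j)
  have : Nat.card ({α : Fin (m+1) →₀ ℕ // (α.sum fun _ e => e) ≤ e'}
      ⊕ (Fin D × (Fin m → Fin (e'+D+1)))) = B (m+1) e' + D * (e'+D+1)^m := by
    rw [Nat.card_sum, Nat.card_prod, Nat.card_fun]
    simp [B]
  omega

lemma finrank_restrict (n m : ℕ) :
    finrank ℂ (restrictTotalDegree (Fin n) ℂ m) = B n m := by
  haveI : Finite ↥{α : Fin n →₀ ℕ | (α.sum fun _ e => e) ≤ m} := finB n m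
  letI : Fintype ↥{α : Fin n →₀ ℕ | (α.sum fun _ e => e) ≤ m} := Fintype.ofFinite _
  letI : Fintype {α : Fin n →₀ ℕ // (α.sum fun _ e => e) ≤ m} := ‹_›
  rw [show restrictTotalDegree (Fin n) ℂ m
      = restrictSupport ℂ {α : Fin n →₀ ℕ | (α.sum fun _ e => e) ≤ m} from rfl]
  rw [Module.finrank_eq_card_basis (basisRestrictSupport ℂ _), B, Nat.card_eq_fintype_card]
  rfl

lemma totalDegree_aeval_le {n : ℕ} (U : Fin n → MvPolynomial (Fin n) ℂ) (D' : ℕ)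
    (hU : ∀ j, (U j).totalDegree ≤ D') (q : MvPolynomial (Fin n) ℂ) :
    (aeval U q).totalDegree ≤ q.totalDegree * D' := by
  rw [aeval_def, eval₂_eq]
  apply totalDegree_finsetSum_le
  intro α hα
  calc (algebraMap ℂ (MvPolynomial (Fin n) ℂ) (coeff α q) * ∏ j ∈ α.support, U j ^ α j).totalDegree
      ≤ (algebraMap ℂ (MvPolynomial (Fin n) ℂ) (coeff α q)).totalDegree
        + (∏ j ∈ α.support, U j ^ α j).totalDegree := totalDegree_mul _ _
    _ ≤ 0 + ∑ j ∈ α.support, (U j ^ α j).totalDegree := by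
        refine add_le_add ?_ (totalDegree_finset_prod _ _)
        rw [algebraMap_eq]
        exact (totalDegree_C _).le
    _ ≤ ∑ j ∈ α.support, α j * D' := by
        rw [zero_add]
        exact Finset.sum_le_sum (fun j _ => (totalDegree_pow _ _).trans
          (Nat.mul_le_mul_left _ (hU j)))
    _ = (α.sum fun _ e => e) * D' := by rw [Finsupp.sum, Finset.sum_mul]
    _ ≤ q.totalDegree * D' := Nat.mul_le_mul_right _ (le_totalDegree hα)

lemma eval_bind1 {n : ℕ} (v : Fin n → ℂ) (g : Fin n → MvPolynomial (Fin n) ℂ)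
    (p : MvPolynomial (Fin n) ℂ) :
    eval v (bind₁ g p) = eval (fun j => eval v (g j)) p := by
  rw [hom_bind₁]
  have hc : (eval v).comp (C : ℂ →+* MvPolynomial (Fin n) ℂ) = RingHom.id ℂ :=
    RingHom.ext (fun r => eval_C _)
  rw [hc]
  rfl

lemma exists_annihilator {n : ℕ} (hn : 1 ≤ n) (h : MvPolynomial (Fin n) ℂ) (hne : h ≠ 0)
    (U : Fin n → MvPolynomial (Fin n) ℂ) :
    ∃ q : MvPolynomial (Fin n) ℂ, q ≠ 0 ∧ h ∣ aeval U q := by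
  by_contra hcon
  push_neg at hcon
  have hq : ∀ q : MvPolynomial (Fin n) ℂ, h ∣ aeval U q → q = 0 := by
    intro q hdvd
    by_contra hq0
    exact hcon q hq0 hdvd
  obtain ⟨m, rfl⟩ : ∃ m, n = m + 1 := ⟨n - 1, by omega⟩
  set D := h.totalDegree with hD
  set D' := 1 + Finset.univ.sup (fun j => (U j).totalDegree) with hD'
  have hD'1 : 1 ≤ D' := Nat.le_add_right _ _
  have hUle : ∀ j, (U j).totalDegree ≤ D' := by
    intro j
    rw [hD']
    exact le_trans (Finset.le_sup (f := fun j => (U j).totalDegree) (Finset.mem_univ j))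
      (Nat.le_add_left _ 1)
  set t := D * ((m+1) * D')^m with ht
  set d := (m+1) * t with hd
  set e := d * D' with he
  have hpow : 1 ≤ ((m+1) * D')^m :=
    Nat.one_le_pow _ _ (Nat.mul_pos (Nat.succ_pos m) hD'1)
  have hDe : D ≤ e := by
    calc D ≤ D * ((m+1) * D')^m := Nat.le_mul_of_pos_right _ (by omega)
      _ ≤ (m+1) * t := Nat.le_mul_of_pos_left _ (by omega)
      _ ≤ d * D' := Nat.le_mul_of_pos_right _ (by omega)
  set e' := e - D with he'
  have he'D : e' + D = e := by omega
  let P := MvPolynomial (Fin (m+1)) ℂ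
  let Θ : P →ₗ[ℂ] P := (aeval U).toLinearMap
  have hΘval : ∀ p : P, Θ p = aeval U p := fun _ => rfl
  have hΘ : Function.Injective Θ := by
    intro a b hab
    have h0 : aeval U (a - b) = 0 := by
      rw [map_sub, sub_eq_zero]
      exact hab
    have := hq (a - b) (h0 ▸ dvd_zero h)
    rwa [sub_eq_zero] at this
  let Mul : P →ₗ[ℂ] P := LinearMap.mulLeft ℂ h
  have hMul : Function.Injective Mul := fun a b hab => mul_left_cancel₀ hne hab
  set V1 := restrictTotalDegree (Fin (m+1)) ℂ d with hV1
  set V2 := restrictTotalDegree (Fin (m+1)) ℂ e' with hV2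
  set W := restrictTotalDegree (Fin (m+1)) ℂ e with hW
  set S1 := V1.map Θ with hS1def
  set S2 := V2.map Mul with hS2def
  haveI : Module.Finite ℂ S1 := Module.Finite.map _ _
  haveI : Module.Finite ℂ S2 := Module.Finite.map _ _
  have hS1 : S1 ≤ W := by
    rintro p hp
    rw [hS1def, Submodule.mem_map] at hp
    obtain ⟨q, hq1, rfl⟩ := hp
    rw [hV1, mem_restrictTotalDegree] at hq1
    rw [hW, mem_restrictTotalDegree, hΘval]
    calc (aeval U q).totalDegree ≤ q.totalDegree * D' := totalDegree_aeval_le U D' hUle q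
      _ ≤ d * D' := Nat.mul_le_mul_right _ hq1
  have hS2 : S2 ≤ W := by
    rintro p hp
    rw [hS2def, Submodule.mem_map] at hp
    obtain ⟨a, ha1, rfl⟩ := hp
    rw [hV2, mem_restrictTotalDegree] at ha1
    rw [hW, mem_restrictTotalDegree]
    calc (h * a).totalDegree ≤ D + a.totalDegree := totalDegree_mul _ _
      _ ≤ D + e' := by omega
      _ = e := by omega
  have hdisj : S1 ⊓ S2 = ⊥ := by
    rw [eq_bot_iff]
    intro p hp
    rw [Submodule.mem_inf] at hp
    obtain ⟨hp1, hp2⟩ := hp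
    rw [hS1def, Submodule.mem_map] at hp1
    obtain ⟨q, _, rfl⟩ := hp1
    rw [hS2def, Submodule.mem_map] at hp2
    obtain ⟨a, _, hpa⟩ := hp2
    have : h ∣ aeval U q := ⟨a, hpa.symm⟩
    have hq0 := hq q this
    simp [hq0, Submodule.mem_bot, hΘval]
  have r1 : finrank ℂ S1 = B (m+1) d := by
    rw [← finrank_restrict (m+1) d]
    exact (LinearEquiv.finrank_eq (Submodule.equivMapOfInjective Θ hΘ V1)).symm
  have r2 : finrank ℂ S2 = B (m+1) e' := by
    rw [← finrank_restrict (m+1) e']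
    exact (LinearEquiv.finrank_eq (Submodule.equivMapOfInjective Mul hMul V2)).symm
  have hsum : finrank ℂ S1 + finrank ℂ S2 ≤ finrank ℂ W := by
    have hadd := Submodule.finrank_sup_add_finrank_inf_eq S1 S2
    rw [hdisj, finrank_bot, add_zero] at hadd
    rw [← hadd]
    exact Submodule.finrank_mono (sup_le hS1 hS2)
  rw [r1, r2, finrank_restrict] at hsum
  have c1 : (t+1)^(m+1) ≤ B (m+1) d := card_le1 (m+1) t
  have c2 : B (m+1) e ≤ B (m+1) e' + D * (e+1)^m := by
    have := card_le2 m e' D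
    rw [he'D] at this
    exact this
  have hnum : D * (e+1)^m < (t+1)^(m+1) := by
    have h1 : e + 1 ≤ (m+1) * D' * (t+1) := by
      have h2 : 1 ≤ (m+1) * D' := Nat.mul_pos (Nat.succ_pos m) hD'1
      calc e + 1 = (m+1) * t * D' + 1 := by rw [he, hd]
        _ ≤ (m+1) * D' * t + (m+1) * D' := by
            have h3 : (m+1) * t * D' = (m+1) * D' * t := by ring
            omega
        _ = (m+1) * D' * (t+1) := by ring
    calc D * (e+1)^m ≤ D * ((m+1) * D' * (t+1))^m :=
          Nat.mul_le_mul_left _ (Nat.pow_le_pow_left h1 m)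
      _ = D * ((m+1) * D')^m * (t+1)^m := by rw [mul_pow, mul_assoc]
      _ = t * (t+1)^m := by rw [ht]
      _ < (t+1) * (t+1)^m :=
          (Nat.mul_lt_mul_right (pow_pos (Nat.succ_pos t) m)).mpr (Nat.lt_succ_self t)
      _ = (t+1)^(m+1) := by rw [pow_succ, mul_comm]
  have hBd : B (m+1) d ≤ D * (e+1)^m := by omega
  exact absurd (le_trans c1 hBd) (not_le.mpr hnum)


end AuxStmt7

end

open AuxStmt7 in
theorem stmt7 (n : ℕ) (hn : 1 ≤ n) (f : MvPolynomial (Fin n) ℂ) (hirr : Irreducible f)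
    (h0 : eval (fun _ => (0 : ℂ)) f ≠ 0)
    (hsm : ∀ x : Fin n → ℂ, eval x f = 0 → ∃ i, eval x (pderiv i f) ≠ 0) :
    ∃ g : MvPolynomial (Fin n) ℂ, g ≠ 0 ∧
      ∀ u : Fin n → ℂ, eval u g ≠ 0 →
        ∀ (l : ℂ) (x : Fin n → ℂ),
          (eval x f = 0 ∧ ∀ i, eval x (pderiv i f) - l * (u i - x i) = 0) →
          l ≠ 0 ∧ ∀ i, x i ≠ 0 := by
  classical
  have exg : ∀ i : Fin n, ∃ gi : MvPolynomial (Fin n) ℂ, gi ≠ 0 ∧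
      ∀ (u : Fin n → ℂ) (l : ℂ) (x : Fin n → ℂ), l ≠ 0 → eval x f = 0 →
        (∀ j, eval x (pderiv j f) - l * (u j - x j) = 0) → x i = 0 → eval u gi = 0 := by
    intro i
    set sub0 : Fin n → MvPolynomial (Fin n) ℂ := fun j => if j = i then 0 else X j with hsub0
    set fbar := bind₁ sub0 f with hfbardef
    have hfbar : fbar ≠ 0 := by
      intro hz
      apply h0
      have hz2 := congrArg (eval (fun _ => (0:ℂ))) hz
      rw [map_zero, hfbardef, eval_bind1] at hz2
      have hpt : (fun j => eval (fun _ => (0:ℂ)) (sub0 j)) = (fun _ => (0:ℂ)) := by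
        funext j
        rw [hsub0]
        by_cases hj : j = i <;> simp [hj]
      rwa [hpt] at hz2
    set δ : Fin n → MvPolynomial (Fin n) ℂ := fun j => bind₁ sub0 (pderiv j f) with hδ
    set Uu : Fin n → MvPolynomial (Fin n) ℂ :=
      fun j => (if j = i then 0 else X j) + X i * δ j with hUu
    obtain ⟨q, hq0, b, hb⟩ := exists_annihilator hn fbar hfbar Uu
    refine ⟨q, hq0, ?_⟩
    intro u l x hl hfx hLag hxi
    set v : Fin n → ℂ := fun j => if j = i then l⁻¹ else x j with hv
    have hsubeval : ∀ p : MvPolynomial (Fin n) ℂ, eval v (bind₁ sub0 p) = eval x p := by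
      intro p
      have hpt : (fun j => eval v (sub0 j)) = x := by
        funext j
        rw [hsub0]
        by_cases hj : j = i
        · simp [hj, hxi]
        · simp [hj, hv]
      rw [eval_bind1, hpt]
    have hLag' : ∀ j, eval x (pderiv j f) = l * (u j - x j) := by
      intro j
      have := hLag j
      linear_combination this
    have hUj : ∀ j, eval v (Uu j) = u j := by
      intro j
      rw [hUu]
      simp only [map_add, map_mul]
      rw [show eval v (δ j) = eval x (pderiv j f) from hsubeval _, hLag']
      have hvi : eval v (X i) = l⁻¹ := by simp [hv]
      by_cases hj : j = i
      · subst hj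
        simp only [if_pos rfl, map_zero, hvi]
        rw [hxi]
        field_simp
        simp
      · simp only [if_neg hj, hvi, eval_X]
        rw [hv]
        simp only [if_neg hj]
        field_simp
        ring
    have heq : eval u q = eval v (aeval Uu q) := by
      have hpt : (fun j => eval v (Uu j)) = u := funext hUj
      rw [aeval_eq_bind₁, eval_bind1, hpt]
    rw [heq, hb, map_mul, hsubeval f, hfx, zero_mul]
  choose gi hgi0 hgiv using exg
  refine ⟨∏ i : Fin n, gi i, ?_, ?_⟩
  · rw [Finset.prod_ne_zero_iff]
    exact fun i _ => hgi0 i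
  · intro u hu l x ⟨hfx, hLag⟩
    have hl : l ≠ 0 := by
      intro hl0
      obtain ⟨j, hj⟩ := hsm x hfx
      apply hj
      have := hLag j
      rw [hl0, zero_mul, sub_zero] at this
      exact this
    refine ⟨hl, fun i hxi => ?_⟩
    apply hu
    rw [map_prod]
    exact Finset.prod_eq_zero (Finset.mem_univ i) (hgiv i u l x hl hfx hLag hxi)
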